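/- Let B = k[X₁, X₂], a ∈ k, t ≥ 2, s ≥ t+1, and Q = X₂² − a·X₁·X₂. Then X₁^{s+1} ∉ (Q, X₁^t·X₂), and the Hilbert function of B/(Q, X₁^t X₂, X₁^{s+1}) equals 1 in degree 0; 2 in degrees 1 through t (with value 2 in each of degrees 2, …, t and value 2 in degree 1); 1 in degrees t+1 through s; and 0 in degrees ≥ s+1. -/

import Mathlib

open MvPolynomial

/-- The Hilbert function of `k[X₁,X₂]/K` in degree `n`:
`dim_k S_n − dim_k K_n`. -/
noncomputable def hilbFn (k : Type*) [Field k] (K : Ideal (MvPolynomial (Fin 2) k)) (n : ℕ) : ℕ :=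
  Module.finrank k (homogeneousSubmodule (Fin 2) k n) -
    Module.finrank k
      (Submodule.restrictScalars k K ⊓ homogeneousSubmodule (Fin 2) k n : Submodule k _)

namespace HFTaux
open Finsupp
variable {k : Type*} [Field k]

noncomputable def M (i j : ℕ) : MvPolynomial (Fin 2) k :=
  monomial (single 0 i + single 1 j) 1

lemma apply0 (i j : ℕ) : (single (0:Fin 2) i + single (1:Fin 2) j) 0 = i := by
  simp [Finsupp.single_apply]

lemma apply1 (i j : ℕ) : (single (0:Fin 2) i + single (1:Fin 2) j) 1 = j := by
  simp [Finsupp.single_apply]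

lemma d_eq (d : Fin 2 →₀ ℕ) : d = single 0 (d 0) + single 1 (d 1) := by
  ext i; fin_cases i <;> simp [Finsupp.single_apply]

lemma idx_add (i j i' j' : ℕ) :
    (single (0:Fin 2) i + single 1 j) + (single 0 i' + single 1 j')
      = single 0 (i+i') + single 1 (j+j') := by
  rw [single_add, single_add, add_add_add_comm]

lemma idx_inj {i j i' j' : ℕ} (h : (single (0:Fin 2) i + single 1 j) = single 0 i' + single 1 j') :
    i = i' ∧ j = j' := by
  constructor
  · have := congrArg (fun d => d 0) h; simpa [apply0] using this
  · have := congrArg (fun d => d 1) h; simpa [apply1] using this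

lemma M_mul (i j i' j' : ℕ) : (M i j : MvPolynomial (Fin 2) k) * M i' j' = M (i+i') (j+j') := by
  rw [M, M, M, monomial_mul, one_mul, idx_add]

lemma X1_eq : (X 1 : MvPolynomial (Fin 2) k) = M 0 1 := by
  rw [M, X, single_zero, zero_add]

lemma X1_mul_M (i j : ℕ) : (X 1 : MvPolynomial (Fin 2) k) * M i j = M i (j+1) := by
  rw [X1_eq, M_mul, zero_add, add_comm 1 j]

lemma M_def' (i : ℕ) : (M i 0 : MvPolynomial (Fin 2) k) = monomial (single 0 i) 1 := by
  rw [M, single_zero, add_zero]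

lemma X0_pow (i : ℕ) : (X 0 ^ i : MvPolynomial (Fin 2) k) = M i 0 := by
  rw [M_def', X_pow_eq_monomial]

lemma smul_M (c : k) (i j : ℕ) : c • (M i j : MvPolynomial (Fin 2) k)
    = monomial (single 0 i + single 1 j) c := by
  rw [M, smul_monomial, smul_eq_mul, mul_one]

lemma Q_eq (a : k) : (X 1 ^ 2 - C a * X 0 * X 1 : MvPolynomial (Fin 2) k)
    = M 0 2 - a • M 1 1 := by
  rw [smul_M, M, X_pow_eq_monomial, single_zero, zero_add]
  congr 1
  rw [X, X, C_apply, monomial_mul, monomial_mul, mul_one, mul_one, zero_add]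

lemma g2_eq (t : ℕ) : (X 0 ^ t * X 1 : MvPolynomial (Fin 2) k) = M t 1 := by
  rw [X0_pow, X1_eq, M_mul, add_zero, zero_add]

lemma g3_eq (s : ℕ) : (X 0 ^ (s+1) : MvPolynomial (Fin 2) k) = M (s+1) 0 := X0_pow _


/-- normal form of a monomial -/
noncomputable def nf (a : k) (t s : ℕ) (d : Fin 2 →₀ ℕ) : MvPolynomial (Fin 2) k :=
  if d 1 = 0 then (if d 0 ≤ s then monomial (single 0 (d 0)) 1 else 0)
  else (if d 0 + d 1 ≤ t then a ^ (d 1 - 1) • M (d 0 + d 1 - 1) 1 else 0)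

noncomputable def NF (a : k) (t s : ℕ) :
    MvPolynomial (Fin 2) k →ₗ[k] MvPolynomial (Fin 2) k :=
  (Finsupp.linearCombination k (nf a t s)).comp (AddMonoidAlgebra.coeffLinearEquiv k).toLinearMap

lemma NF_monomial (a : k) (t s : ℕ) (d : Fin 2 →₀ ℕ) (c : k) :
    NF a t s (monomial d c) = c • nf a t s d := by
  rw [NF, LinearMap.comp_apply, LinearEquiv.coe_coe, AddMonoidAlgebra.coeffLinearEquiv_apply]
  exact Finsupp.linearCombination_single k c d

lemma nf_apply (a : k) (t s i j : ℕ) :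
    nf a t s (single 0 i + single 1 j) =
      if j = 0 then (if i ≤ s then M i 0 else 0)
      else (if i + j ≤ t then a ^ (j - 1) • M (i + j - 1) 1 else 0) := by
  rw [nf, apply0, apply1, M_def']

lemma nf_shift (a : k) (t s i j : ℕ) :
    nf a t s (single 0 i + single 1 (j+2)) = a • nf a t s (single 0 (i+1) + single 1 (j+1)) := by
  rw [nf_apply, nf_apply, if_neg (show ¬(j+2 = 0) by omega), if_neg (show ¬(j+1 = 0) by omega)]
  by_cases h : i + (j+2) ≤ t
  · rw [if_pos h, if_pos (by omega), smul_smul]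
    have h1 : i + (j + 2) - 1 = i + 1 + (j + 1) - 1 := by omega
    have h2 : (a : k) ^ (j + 2 - 1) = a * a ^ (j + 1 - 1) := by
      rw [show j + 2 - 1 = j + 1 from rfl, show j + 1 - 1 = j from rfl, pow_succ']
    rw [h1, h2]
  · rw [if_neg h, if_neg (by omega), smul_zero]

lemma NF_mul_Q (a : k) (t s : ℕ) (p : MvPolynomial (Fin 2) k) :
    NF a t s (p * (X 1 ^ 2 - C a * X 0 * X 1)) = 0 := by
  induction p using MvPolynomial.induction_on' with
  | add p q hp hq => rw [add_mul, map_add, hp, hq, add_zero]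
  | monomial d c =>
    rw [Q_eq, mul_sub, mul_smul_comm, d_eq d]
    rw [show (monomial (single 0 (d 0) + single 1 (d 1)) c : MvPolynomial (Fin 2) k)
        = c • M (d 0) (d 1) by rw [smul_M]]
    rw [smul_mul_assoc, M_mul, smul_mul_assoc, M_mul, map_sub, map_smul, map_smul, map_smul]
    rw [M, M, NF_monomial, NF_monomial, one_smul, one_smul]
    rw [show d 0 + 0 = d 0 from rfl, show d 1 + 2 = d 1 + 2 from rfl]
    rw [nf_shift a t s (d 0) (d 1)]
    rw [show d 0 + 1 = d 0 + 1 from rfl, show d 1 + 1 = d 1 + 1 from rfl]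
    rw [smul_smul, smul_smul, mul_comm c a, sub_self]

lemma NF_mul_g2 (a : k) (t s : ℕ) (p : MvPolynomial (Fin 2) k) :
    NF a t s (p * (X 0 ^ t * X 1)) = 0 := by
  induction p using MvPolynomial.induction_on' with
  | add p q hp hq => rw [add_mul, map_add, hp, hq, add_zero]
  | monomial d c =>
    rw [g2_eq, d_eq d,
      show (monomial (single 0 (d 0) + single 1 (d 1)) c : MvPolynomial (Fin 2) k)
        = c • M (d 0) (d 1) by rw [smul_M],
      smul_mul_assoc, M_mul, M, map_smul, NF_monomial, one_smul,
      nf_apply, if_neg (by omega), if_neg (by omega), smul_zero]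

lemma NF_mul_g3 (a : k) (t s : ℕ) (hs : t + 1 ≤ s) (p : MvPolynomial (Fin 2) k) :
    NF a t s (p * X 0 ^ (s+1)) = 0 := by
  induction p using MvPolynomial.induction_on' with
  | add p q hp hq => rw [add_mul, map_add, hp, hq, add_zero]
  | monomial d c =>
    rw [g3_eq, d_eq d,
      show (monomial (single 0 (d 0) + single 1 (d 1)) c : MvPolynomial (Fin 2) k)
        = c • M (d 0) (d 1) by rw [smul_M],
      smul_mul_assoc, M_mul, M, map_smul, NF_monomial, one_smul, nf_apply]
    rcases Nat.eq_zero_or_pos (d 1 + 0) with h | h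
    · rw [if_pos h, if_neg (by omega), smul_zero]
    · rw [if_neg (by omega), if_neg (by omega), smul_zero]


lemma W_mem (a : k) : ∀ j, 1 ≤ j → ∀ i,
    (M i j : MvPolynomial (Fin 2) k) - a^(j-1) • M (i+j-1) 1
      ∈ Ideal.span {(X 1 ^ 2 - C a * X 0 * X 1 : MvPolynomial (Fin 2) k)} := by
  intro j hj
  induction j, hj using Nat.le_induction with
  | base =>
    intro i
    rw [show (1:ℕ) - 1 = 0 from rfl, pow_zero, one_smul, show i + 1 - 1 = i from rfl, sub_self]
    exact zero_mem _
  | succ j hj ih =>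
    intro i
    have key : (M i (j+1) : MvPolynomial (Fin 2) k) - a^(j+1-1) • M (i+(j+1)-1) 1
        = X 1 * ((M i j : MvPolynomial (Fin 2) k) - a^(j-1) • M (i+j-1) 1)
          + a^(j-1) • (M (i+j-1) 0 * (X 1 ^ 2 - C a * X 0 * X 1)) := by
      rw [Q_eq, mul_sub, X1_mul_M, mul_smul_comm, X1_mul_M, mul_sub, M_mul, mul_smul_comm,
        M_mul, smul_sub, smul_smul]
      rw [show (1:ℕ)+1 = 2 from rfl, show i + j - 1 + 0 = i + j - 1 by omega,
        show i + j - 1 + 1 = i + j by omega,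
        show (0:ℕ)+1 = 1 from rfl, show j + 1 - 1 = j from rfl,
        show i + (j+1) - 1 = i + j by omega,
        show a^(j-1) * a = a^j by rw [← pow_succ]; congr 1; omega]
      abel
    rw [key]
    refine add_mem (Ideal.mul_mem_left _ _ (ih i)) ?_
    rw [smul_eq_C_mul]
    refine Ideal.mul_mem_left _ _ (Ideal.mul_mem_left _ _ (Ideal.subset_span ?_))
    rfl

lemma mono_sub_nf_mem (a : k) (t s : ℕ) (hs : t + 1 ≤ s) (i j : ℕ) :
    (M i j : MvPolynomial (Fin 2) k) - nf a t s (single 0 i + single 1 j)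
      ∈ Ideal.span {(X 1 ^ 2 - C a * X 0 * X 1 : MvPolynomial (Fin 2) k),
          X 0 ^ t * X 1, X 0 ^ (s+1)} := by
  have hQ : (X 1 ^ 2 - C a * X 0 * X 1 : MvPolynomial (Fin 2) k)
      ∈ ({(X 1 ^ 2 - C a * X 0 * X 1 : MvPolynomial (Fin 2) k), X 0 ^ t * X 1, X 0 ^ (s+1)}
        : Set (MvPolynomial (Fin 2) k)) := by left; rfl
  have hsp : Ideal.span {(X 1 ^ 2 - C a * X 0 * X 1 : MvPolynomial (Fin 2) k)}
      ≤ Ideal.span {(X 1 ^ 2 - C a * X 0 * X 1 : MvPolynomial (Fin 2) k),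
          X 0 ^ t * X 1, X 0 ^ (s+1)} :=
    Ideal.span_mono (by intro x hx; rw [Set.mem_singleton_iff] at hx; rw [hx]; exact hQ)
  rw [nf_apply]
  rcases Nat.eq_zero_or_pos j with hj | hj
  · subst hj
    by_cases h : i ≤ s
    · rw [if_pos rfl, if_pos h, M_def', sub_self]; exact zero_mem _
    · rw [if_pos rfl, if_neg h, sub_zero,
        show (M i 0 : MvPolynomial (Fin 2) k) = M (i-s-1) 0 * M (s+1) 0 by
          rw [M_mul]; congr 1; omega,
        ← g3_eq]
      exact Ideal.mul_mem_left _ _ (Ideal.subset_span (by right; right; rfl))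
  · rw [if_neg (by omega)]
    by_cases h : i + j ≤ t
    · rw [if_pos h]; exact hsp (W_mem a j hj i)
    · rw [if_neg h, sub_zero,
        show (M i j : MvPolynomial (Fin 2) k)
          = ((M i j : MvPolynomial (Fin 2) k) - a^(j-1) • M (i+j-1) 1)
              + a^(j-1) • M (i+j-1) 1 by abel]
      refine add_mem (hsp (W_mem a j hj i)) ?_
      rw [smul_eq_C_mul,
        show (M (i+j-1) 1 : MvPolynomial (Fin 2) k) = M (i+j-1-t) 0 * M t 1 by
          rw [M_mul]; congr 1; omega,
        ← g2_eq]
      exact Ideal.mul_mem_left _ _ (Ideal.mul_mem_left _ _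
        (Ideal.subset_span (by right; left; rfl)))

lemma sub_NF_mem (a : k) (t s : ℕ) (hs : t + 1 ≤ s) (f : MvPolynomial (Fin 2) k) :
    f - NF a t s f ∈ Ideal.span {(X 1 ^ 2 - C a * X 0 * X 1 : MvPolynomial (Fin 2) k),
        X 0 ^ t * X 1, X 0 ^ (s+1)} := by
  induction f using MvPolynomial.induction_on' with
  | add p q hp hq =>
    rw [map_add, show p + q - (NF a t s p + NF a t s q)
      = (p - NF a t s p) + (q - NF a t s q) by abel]
    exact add_mem hp hq
  | monomial d c =>
    rw [NF_monomial, d_eq d,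
      show (monomial (single 0 (d 0) + single 1 (d 1)) c : MvPolynomial (Fin 2) k)
        = c • M (d 0) (d 1) by rw [smul_M], ← smul_sub, smul_eq_C_mul]
    exact Ideal.mul_mem_left _ _ (mono_sub_nf_mem a t s hs (d 0) (d 1))

lemma ker_NF (a : k) (t s : ℕ) (hs : t + 1 ≤ s) :
    Submodule.restrictScalars k (Ideal.span
        {(X 1 ^ 2 - C a * X 0 * X 1 : MvPolynomial (Fin 2) k), X 0 ^ t * X 1, X 0 ^ (s+1)})
      = LinearMap.ker (NF a t s) := by
  ext f
  simp only [Submodule.restrictScalars_mem, LinearMap.mem_ker]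
  constructor
  · intro hf
    rw [Ideal.mem_span_insert] at hf
    obtain ⟨p, z, hz, rfl⟩ := hf
    rw [Ideal.mem_span_pair] at hz
    obtain ⟨u, v, rfl⟩ := hz
    rw [map_add, map_add, NF_mul_Q, NF_mul_g2, NF_mul_g3 a t s hs, add_zero, add_zero]
  · intro h
    have := sub_NF_mem a t s hs f
    rwa [h, sub_zero] at this


lemma degree_eq (d : Fin 2 →₀ ℕ) : d.degree = d 0 + d 1 := by
  have h : d.degree = d.sum fun _ e => e := rfl
  rw [h, Finsupp.sum_fintype] <;> simp [Fin.sum_univ_two]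

def Dset (n : ℕ) : Set (Fin 2 →₀ ℕ) := {d | d 0 + d 1 = n}

lemma Dset_finite (n : ℕ) : (Dset n).Finite := by
  apply Set.Finite.subset (((Set.finite_Iic n).prod (Set.finite_Iic n)).image
    (fun p : ℕ × ℕ => single 0 p.1 + single 1 p.2))
  intro d hd
  refine ⟨(d 0, d 1), ?_, (d_eq d).symm⟩
  have : d 0 + d 1 = n := hd
  constructor <;> simp <;> omega

lemma homog_eq_supported (n : ℕ) :
    homogeneousSubmodule (Fin 2) k n = AddMonoidAlgebra.supported k k (Dset n) := by
  rw [homogeneousSubmodule_eq_finsupp_supported]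
  congr 1
  ext d
  simp [Dset, degree_eq]

lemma homog_fd (n : ℕ) : FiniteDimensional k (homogeneousSubmodule (Fin 2) k n) := by
  rw [homog_eq_supported]
  have : Finite (Dset n) := (Dset_finite n).to_subtype
  exact Module.Finite.equiv (AddMonoidAlgebra.supportedEquivFinsupp (S := k) (R := k) (Dset n)).symm

lemma homog_span (n : ℕ) :
    homogeneousSubmodule (Fin 2) k n
      = Submodule.span k ((fun d => (monomial d 1 : MvPolynomial (Fin 2) k)) '' Dset n) := by
  rw [homog_eq_supported, AddMonoidAlgebra.supported_eq_span_single]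
  congr 1

lemma hilb_eq (a : k) (t s : ℕ) (hs : t + 1 ≤ s) (n : ℕ) :
    hilbFn k (Ideal.span {(X 1 ^ 2 - C a * X 0 * X 1 : MvPolynomial (Fin 2) k),
        X 0 ^ t * X 1, X 0 ^ (s+1)}) n
      = Module.finrank k (Submodule.span k (nf a t s '' Dset n)) := by
  classical
  set P := homogeneousSubmodule (Fin 2) k n with hP
  have hfd : FiniteDimensional k P := homog_fd n
  set Nn := (NF a t s).comp P.subtype with hNn
  have himg : (fun d => NF a t s (monomial d 1)) = nf a t s :=
    funext fun d => by rw [NF_monomial, one_smul]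
  have hrange : LinearMap.range Nn = Submodule.span k (nf a t s '' Dset n) := by
    rw [hNn, LinearMap.range_comp, Submodule.range_subtype, hP, homog_span,
      Submodule.map_span, Set.image_image, himg]
  have hker : Module.finrank k
      (Submodule.restrictScalars k (Ideal.span
        {(X 1 ^ 2 - C a * X 0 * X 1 : MvPolynomial (Fin 2) k), X 0 ^ t * X 1, X 0 ^ (s+1)})
        ⊓ P : Submodule k _)
      = Module.finrank k (LinearMap.ker Nn) := by
    rw [ker_NF a t s hs, hNn, LinearMap.ker_comp,
      show LinearMap.ker (NF a t s) ⊓ P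
          = Submodule.map P.subtype (Submodule.comap P.subtype (LinearMap.ker (NF a t s))) by
        rw [Submodule.map_comap_subtype, inf_comm]]
    exact (LinearEquiv.finrank_eq
      (Submodule.equivMapOfInjective P.subtype (Submodule.injective_subtype P) _)).symm
  have hrn := LinearMap.finrank_range_add_finrank_ker Nn
  rw [hrange] at hrn
  rw [hilbFn, ← hP, hker]
  omega


lemma M_ne_zero (i j : ℕ) : (M i j : MvPolynomial (Fin 2) k) ≠ 0 := by
  rw [M, Ne, monomial_eq_zero]
  exact one_ne_zero

lemma mem_Dset_single (n : ℕ) : (single (0:Fin 2) n) ∈ Dset n := by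
  show (single (0:Fin 2) n) 0 + (single (0:Fin 2) n) 1 = n
  simp [Finsupp.single_apply]

lemma nf_single0 (a : k) (t s n : ℕ) (hn : n ≤ s) :
    nf a t s (single 0 n) = M n 0 := by
  have h : (single (0:Fin 2) n) = single 0 n + single 1 0 := by rw [single_zero, add_zero]
  rw [h, nf_apply, if_pos rfl, if_pos hn]

lemma rank_zero (a : k) (t s : ℕ) :
    Module.finrank k (Submodule.span k (nf a t s '' Dset 0)) = 1 := by
  have hD : Dset 0 = {0} := by
    ext d
    simp only [Dset, Set.mem_setOf_eq, Set.mem_singleton_iff]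
    constructor
    · intro h
      have h0 : d 0 = 0 := by omega
      have h1 : d 1 = 0 := by omega
      rw [d_eq d, h0, h1, single_zero, single_zero, add_zero]
    · intro h; subst h; simp
  have h0 : nf a t s (0 : Fin 2 →₀ ℕ) = M 0 0 := by
    rw [show (0 : Fin 2 →₀ ℕ) = single 0 0 by rw [single_zero], nf_single0 a t s 0 (by omega)]
  rw [hD, Set.image_singleton, h0]
  exact finrank_span_singleton (M_ne_zero 0 0)

lemma span_low (a : k) (t s n : ℕ) (hn1 : 1 ≤ n) (hnt : n ≤ t) (hs : t + 1 ≤ s) :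
    Submodule.span k (nf a t s '' Dset n)
      = Submodule.span k {(M n 0 : MvPolynomial (Fin 2) k), M (n-1) 1} := by
  apply le_antisymm
  · rw [Submodule.span_le]
    rintro x ⟨d, hd, rfl⟩
    have hd' : d 0 + d 1 = n := hd
    rw [nf]
    by_cases hj : d 1 = 0
    · rw [if_pos hj, if_pos (by omega), ← M_def', show d 0 = n by omega]
      exact Submodule.subset_span (by left; rfl)
    · rw [if_neg hj, if_pos (by omega), show d 0 + d 1 - 1 = n - 1 by omega]
      exact Submodule.smul_mem _ _ (Submodule.subset_span (by right; rfl))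
  · rw [Submodule.span_le]
    rintro x hx
    rcases hx with h | h
    · subst h
      exact Submodule.subset_span ⟨single 0 n, mem_Dset_single n,
        nf_single0 a t s n (by omega)⟩
    · rw [Set.mem_singleton_iff] at h
      subst h
      refine Submodule.subset_span ⟨single 0 (n-1) + single 1 1, ?_, ?_⟩
      · simp only [Dset, Set.mem_setOf_eq, apply0, apply1]; omega
      · rw [nf_apply, if_neg one_ne_zero, if_pos (by omega), show n - 1 + 1 - 1 = n - 1 by omega,
          pow_zero, one_smul]

lemma rank_pair (n : ℕ) :
    Module.finrank k (Submodule.span k {(M n 0 : MvPolynomial (Fin 2) k), M (n-1) 1}) = 2 := by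
  classical
  have hne1 : ¬((single (0:Fin 2) n + single 1 0) = single 0 (n-1) + single 1 1) := by
    intro h
    have := congrArg (fun d => d 1) h
    simp only [apply1] at this
    omega
  have hne2 : ¬((single (0:Fin 2) (n-1) + single 1 1) = single 0 n + single 1 0) := fun h =>
    hne1 h.symm
  have li : LinearIndependent k ![(M n 0 : MvPolynomial (Fin 2) k), M (n-1) 1] := by
    rw [LinearIndependent.pair_iff]
    intro c1 c2 h
    have h1 := congrArg (coeff (single 0 n + single 1 0)) h
    have h2 := congrArg (coeff (single 0 (n-1) + single 1 1)) h
    simp only [coeff_add, coeff_smul, M, coeff_monomial, coeff_zero, if_pos rfl,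
      if_neg hne1, if_neg hne2, smul_eq_mul, if_true, eq_self_iff_true, mul_one, mul_zero, add_zero, zero_add] at h1 h2
    exact ⟨h1, h2⟩
  have := finrank_span_eq_card li
  rwa [Matrix.range_cons_cons_empty, Fintype.card_fin] at this

lemma span_mid (a : k) (t s n : ℕ) (hn1 : t + 1 ≤ n) (hns : n ≤ s) :
    Submodule.span k (nf a t s '' Dset n)
      = Submodule.span k {(M n 0 : MvPolynomial (Fin 2) k)} := by
  apply le_antisymm
  · rw [Submodule.span_le]
    rintro x ⟨d, hd, rfl⟩
    have hd' : d 0 + d 1 = n := hd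
    rw [nf]
    by_cases hj : d 1 = 0
    · rw [if_pos hj, if_pos (by omega), ← M_def', show d 0 = n by omega]
      exact Submodule.subset_span rfl
    · rw [if_neg hj, if_neg (by omega)]
      exact zero_mem _
  · rw [Submodule.span_le]
    rintro x hx
    rw [Set.mem_singleton_iff] at hx
    subst hx
    exact Submodule.subset_span ⟨single 0 n, mem_Dset_single n, nf_single0 a t s n hns⟩

lemma rank_mid (n : ℕ) :
    Module.finrank k (Submodule.span k {(M n 0 : MvPolynomial (Fin 2) k)}) = 1 :=
  finrank_span_singleton (M_ne_zero n 0)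

lemma span_top (a : k) (t s n : ℕ) (hs : t + 1 ≤ s) (hn : s + 1 ≤ n) :
    Submodule.span k (nf a t s '' Dset n) = ⊥ := by
  rw [← le_bot_iff, Submodule.span_le]
  rintro x ⟨d, hd, rfl⟩
  have hd' : d 0 + d 1 = n := hd
  rw [nf]
  by_cases hj : d 1 = 0
  · rw [if_pos hj, if_neg (by omega)]
    exact Submodule.mem_bot k |>.mpr rfl
  · rw [if_neg hj, if_neg (by omega)]
    exact Submodule.mem_bot k |>.mpr rfl

end HFTaux

open HFTaux in
/-- For `B = k[X₁,X₂]`, `a ∈ k`, `t ≥ 2`, `s ≥ t+1` and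
`Q = X₂² − aX₁X₂`, one has `X₁^{s+1} ∉ (Q, X₁^t X₂)` and the Hilbert function of
`B/(Q, X₁^t X₂, X₁^{s+1})` is `1` in degree `0`, `2` in degrees `1,…,t`,
`1` in degrees `t+1,…,s` and `0` in degrees `≥ s+1`. -/
theorem hilbert_function_truncated
    (k : Type*) [Field k] (a : k) (t s : ℕ) (ht : 2 ≤ t) (hs : t + 1 ≤ s)
    (Q : MvPolynomial (Fin 2) k) (hQ : Q = X 1 ^ 2 - C a * X 0 * X 1) :
    (X 0 ^ (s + 1) ∉ Ideal.span ({Q, X 0 ^ t * X 1} : Set (MvPolynomial (Fin 2) k))) ∧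
      (hilbFn k (Ideal.span {Q, X 0 ^ t * X 1, X 0 ^ (s + 1)}) 0 = 1 ∧
        (∀ j, 1 ≤ j → j ≤ t →
          hilbFn k (Ideal.span {Q, X 0 ^ t * X 1, X 0 ^ (s + 1)}) j = 2) ∧
        (∀ j, t + 1 ≤ j → j ≤ s →
          hilbFn k (Ideal.span {Q, X 0 ^ t * X 1, X 0 ^ (s + 1)}) j = 1) ∧
        (∀ j, s + 1 ≤ j →
          hilbFn k (Ideal.span {Q, X 0 ^ t * X 1, X 0 ^ (s + 1)}) j = 0)) := by
  subst hQ
  refine ⟨?_, ?_, ?_, ?_, ?_⟩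
  · intro hmem
    rw [Ideal.mem_span_pair] at hmem
    obtain ⟨p, q, hpq⟩ := hmem
    have h2 := congrArg (aeval ![Polynomial.X, (0 : Polynomial k)]) hpq
    simp only [map_add, map_mul, map_sub, map_pow, aeval_X, aeval_C,
      Matrix.cons_val_one, Matrix.head_cons, Matrix.cons_val_zero, mul_zero, zero_mul,
      sub_zero, zero_pow, ne_eq, OfNat.ofNat_ne_zero, not_false_eq_true, zero_sub, add_zero,
      neg_zero, mul_neg, sub_self] at h2
    exact pow_ne_zero _ Polynomial.X_ne_zero h2.symm
  · rw [hilb_eq a t s hs 0, rank_zero]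
  · intro j hj1 hj2
    rw [hilb_eq a t s hs j, span_low a t s j hj1 hj2 hs, rank_pair]
  · intro j hj1 hj2
    rw [hilb_eq a t s hs j, span_mid a t s j hj1 hj2, rank_mid]
  · intro j hj
    rw [hilb_eq a t s hs j, span_top a t s j hs hj, finrank_bot]
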